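/- Fix a dyadic grid D on ℝ^n, a cube J∈D, and an m-linear Haar multiplier P^{α⃗}_ε with respect to D such that α_j≠1⃗ for some j∈{2,…,m}. Define f_j:=|J|^{1/2}h_J^{α_j} if α_j≠1⃗ and f_j:=χ_J if α_j=1⃗, for j=1,…,m. Then for every locally integrable b, [b,P^{α⃗}_ε]_1(f_1,…,f_m) = ε_J(b−⟨b⟩_J)|J|^{1/2}h_J^{α_{m+1}}, and hence |[b,P^{α⃗}_ε]_1(f_1,…,f_m)(x)| = |ε_J|·|b(x)−⟨b⟩_J|·χ_J(x) for a.e. x. -/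

import Mathlib

open MeasureTheory
open scoped ENNReal BigOperators

noncomputable section

/-- Real-valued functions on `ℝⁿ`, modeled as `Fin n → ℝ`. -/
abbrev Fn (n : ℕ) := (Fin n → ℝ) → ℝ

/-- An axis-parallel half-open cube in `ℝⁿ`. -/
structure Cube (n : ℕ) where
  corner : Fin n → ℝ
  side : ℝ
  side_pos : 0 < side

namespace Cube

/-- The set of points of a cube. -/
def toSet {n : ℕ} (Q : Cube n) : Set (Fin n → ℝ) :=
  {x | ∀ i, Q.corner i ≤ x i ∧ x i < Q.corner i + Q.side}

/-- The concentric triple `3Q` of a cube `Q`. -/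
def triple {n : ℕ} (Q : Cube n) : Cube n :=
  ⟨fun i => Q.corner i - Q.side, 3 * Q.side, by have := Q.side_pos; linarith⟩

/-- One-dimensional Haar factor on `[a, a+s)`; `one = true` gives the
noncancellative factor (indicator), `one = false` the cancellative one. -/
def haar1 (a s : ℝ) (one : Bool) (t : ℝ) : ℝ :=
  if one then (if a ≤ t ∧ t < a + s then 1 else 0)
  else (if a ≤ t ∧ t < a + s / 2 then 1 else 0) - (if a + s / 2 ≤ t ∧ t < a + s then 1 else 0)

/-- The Haar function `h_Q^α`, where `α i = true` encodes `α_i = 1` (noncancellative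
in direction `i`). It has modulus `|Q|^{-1/2}` on `Q`. -/
def haar {n : ℕ} (Q : Cube n) (α : Fin n → Bool) : Fn n :=
  fun x => (Real.sqrt (Q.side ^ n))⁻¹ * ∏ i, haar1 (Q.corner i) Q.side (α i) (x i)

end Cube

/-- Average of `f` over the cube `Q` (w.r.t. Lebesgue measure). -/
def cubeAvg {n : ℕ} (Q : Cube n) (f : Fn n) : ℝ := ⨍ x in Q.toSet, f x

/-- Hölder conjugate exponent `p' = p/(p-1)`. -/
def hconj (p : ℝ) : ℝ := p / (p - 1)

/-- The total exponent `p` with `1/p = ∑ j 1/p_j`. -/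
def pTot {ι : Type*} [Fintype ι] (p : ι → ℝ) : ℝ := (∑ j, (p j)⁻¹)⁻¹

/-! ### Muckenhoupt weights -/

/-- The `A_p` quantity of a weight on a fixed cube. -/
def apQ {n : ℕ} (p : ℝ) (w : Fn n) (Q : Cube n) : ℝ :=
  cubeAvg Q w * (cubeAvg Q fun x => w x ^ (1 - hconj p)) ^ (p - 1)

/-- The `A_p` characteristic `[w]_{A_p}`. -/
def apConst {n : ℕ} (p : ℝ) (w : Fn n) : ℝ := ⨆ Q : Cube n, apQ p w Q

/-- `w` is a Muckenhoupt `A_p` weight. -/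
def IsAp {n : ℕ} (p : ℝ) (w : Fn n) : Prop :=
  (∀ x, 0 < w x) ∧ LocallyIntegrable w volume ∧ BddAbove (Set.range (apQ p w))

/-- The weight `ν_{w⃗} = ∏ j w_j^{p/p_j}` associated to a weight vector. -/
def nuW {n : ℕ} {ι : Type*} [Fintype ι] (p : ι → ℝ) (w : ι → Fn n) : Fn n :=
  fun x => ∏ j, w j x ^ (pTot p / p j)

/-- The multilinear `A_{p⃗}` quantity on a fixed cube (this is `[w⃗]_{A_{p⃗}}^{1/p}`
localized to `Q`). -/
def multiApQ {n : ℕ} {ι : Type*} [Fintype ι] (p : ι → ℝ) (w : ι → Fn n) (Q : Cube n) : ℝ :=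
  (cubeAvg Q (nuW p w)) ^ (1 / pTot p) *
    ∏ j, (cubeAvg Q fun x => w j x ^ (1 - hconj (p j))) ^ (1 / hconj (p j))

/-- The multilinear characteristic `[w⃗]_{A_{p⃗}}`. -/
def multiApConst {n : ℕ} {ι : Type*} [Fintype ι] (p : ι → ℝ) (w : ι → Fn n) : ℝ :=
  (⨆ Q : Cube n, multiApQ p w Q) ^ pTot p

/-- `w⃗` is a multilinear `A_{p⃗}` weight. -/
def IsMultiAp {n : ℕ} {ι : Type*} [Fintype ι] (p : ι → ℝ) (w : ι → Fn n) : Prop :=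
  (∀ j x, 0 < w j x) ∧ BddAbove (Set.range (multiApQ p w))

/-! ### BMO spaces -/

/-- The BMO quantity of `b` on a cube. -/
def bmoQ {n : ℕ} (b : Fn n) (Q : Cube n) : ℝ := cubeAvg Q fun x => |b x - cubeAvg Q b|

/-- The BMO norm `‖b‖_{BMO(ℝⁿ)}`. -/
def bmoNorm {n : ℕ} (b : Fn n) : ℝ := ⨆ Q : Cube n, bmoQ b Q

/-- `b ∈ BMO(ℝⁿ)`. -/
def MemBMO {n : ℕ} (b : Fn n) : Prop :=
  LocallyIntegrable b volume ∧ BddAbove (Set.range (bmoQ b))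

/-- The weighted BMO quantity of `b` on a cube. -/
def bmoNuQ {n : ℕ} (ν b : Fn n) (Q : Cube n) : ℝ :=
  (∫ x in Q.toSet, |b x - cubeAvg Q b|) / (∫ x in Q.toSet, ν x)

/-- The Bloom weighted BMO norm `‖b‖_{BMO(ν)}`. -/
def bmoNuNorm {n : ℕ} (ν b : Fn n) : ℝ := ⨆ Q : Cube n, bmoNuQ ν b Q

/-- `b ∈ BMO(ν)`. -/
def MemBMOnu {n : ℕ} (ν b : Fn n) : Prop :=
  LocallyIntegrable b volume ∧ BddAbove (Set.range (bmoNuQ ν b))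

/-! ### Weighted Lebesgue norms -/

/-- The weighted norm `‖f‖_{L^p(w)} = (∫ |f|^p w)^{1/p}` valued in `ℝ≥0∞`. -/
def wnorm {n : ℕ} (p : ℝ) (w : Fn n) (f : Fn n) : ℝ≥0∞ :=
  (∫⁻ x, ENNReal.ofReal (|f x| ^ p * w x)) ^ (1 / p)

/-- The weighted norm of an `ℝ≥0∞`-valued function. -/
def wnormE {n : ℕ} (p : ℝ) (w : Fn n) (F : (Fin n → ℝ) → ℝ≥0∞) : ℝ≥0∞ :=
  (∫⁻ x, F x ^ p * ENNReal.ofReal (w x)) ^ (1 / p)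

/-! ### Multilinear operators and commutators -/

/-- An `m`-linear operator on functions on `ℝⁿ` (as a raw map on `m`-tuples). -/
abbrev MOp (n m : ℕ) := (Fin m → Fn n) → Fn n

/-- `T` is `m`-linear in each entry. -/
def IsMLinear {n m : ℕ} (T : MOp n m) : Prop :=
  ∀ (j : Fin m) (f : Fin m → Fn n) (g : Fn n) (c : ℝ),
    T (Function.update f j fun x => c * f j x + g x) =
      fun x => c * T f x + T (Function.update f j g) x

/-- The mcommutator `[b, T]_β`. -/
def mcommutator {n m : ℕ} (b : Fn n) (β : Fin m) (T : MOp n m) : MOp n m :=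
  fun f x => b x * T f x - T (Function.update f β fun y => b y * f β y) x

/-- The iterated mcommutator `[b_0, [b_1, ⋯ [b_{ℓ-1}, T]_{ι(ℓ-1)} ⋯ ]_{ι 1}]_{ι 0}`. -/
def iterComm {n m : ℕ} : ∀ {ℓ : ℕ}, (Fin ℓ → Fin m) → (Fin ℓ → Fn n) → MOp n m → MOp n m
  | 0, _, _, T => T
  | (_ + 1), ι, b, T =>
      mcommutator (b 0) (ι 0) (iterComm (fun s => ι s.succ) (fun s => b s.succ) T)

/-- Iterated mcommutator in a fixed entry `β` with `k` symbols. -/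
def iterCommAt {n m : ℕ} (β : Fin m) : ∀ {k : ℕ}, (Fin k → Fn n) → MOp n m → MOp n m
  | 0, _, T => T
  | (k + 1), b, T =>
      mcommutator (b (Fin.last k)) β (iterCommAt β (fun i : Fin k => b i.castSucc) T)

/-- The higher order multilinear mcommutator `C^{k⃗,m}_{{b⃗}}(T)`. -/
def higherComm {n m : ℕ} (k : Fin m → ℕ) (b : (j : Fin m) → Fin (k j) → Fn n)
    (T : MOp n m) : MOp n m :=
  (List.finRange m).foldr (fun j T' => iterCommAt j (b j) T') T

/-! ### Calderón–Zygmund operators -/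

/-- Standard estimates for an `m`-linear CZ kernel (with constants `C`, `ε`):
size decay `|K| ≤ C (∑ |y_k - y_ℓ|)^{-nm}` and Hölder smoothness of order `ε`
in each variable. -/
structure IsCZK (n m : ℕ) (K : (Fin (m + 1) → Fin n → ℝ) → ℝ) (C ε : ℝ) : Prop where
  size : ∀ y : Fin (m + 1) → Fin n → ℝ, (∃ k l, y k ≠ y l) →
    |K y| ≤ C / (∑ k, ∑ l, dist (y k) (y l)) ^ (n * m)
  smooth : ∀ (j : Fin (m + 1)) (y : Fin (m + 1) → Fin n → ℝ) (y' : Fin n → ℝ),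
    dist (y j) y' ≤ (1 / 2) * ⨆ k, dist (y j) (y k) →
    |K y - K (Function.update y j y')| ≤
      C * dist (y j) y' ^ ε / (∑ k, ∑ l, dist (y k) (y l)) ^ ((n * m : ℝ) + ε)

/-- Bounded measurable compactly supported function. -/
def IsBCS {n : ℕ} (f : Fn n) : Prop :=
  Measurable f ∧ HasCompactSupport f ∧ ∃ M, ∀ x, |f x| ≤ M

/-- `T` is an `m`-linear Calderón–Zygmund operator: it is `m`-linear, bounded on some
tuple of (unweighted) Lebesgue spaces, and is represented off the diagonal by a kernel
satisfying the standard estimates. -/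
structure IsCZO (n m : ℕ) (T : MOp n m) : Prop where
  mlinear : IsMLinear T
  bounded : ∃ q : Fin m → ℝ, (∀ j, 1 < q j) ∧ ∃ A : ℝ, 0 ≤ A ∧
    ∀ f : Fin m → Fn n,
      wnorm (pTot q) (fun _ => (1 : ℝ)) (T f) ≤
        ENNReal.ofReal A * ∏ j, wnorm (q j) (fun _ => (1 : ℝ)) (f j)
  kernel : ∃ (K : (Fin (m + 1) → Fin n → ℝ) → ℝ) (C ε : ℝ), 0 < C ∧ 0 < ε ∧
    IsCZK n m K C ε ∧
    ∀ f : Fin m → Fn n, (∀ j, IsBCS (f j)) →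
      ∀ x ∉ ⋂ j, tsupport (f j),
        T f x = ∫ y : Fin m → Fin n → ℝ, K (Fin.cons x y) * ∏ j, f j (y j)

/-! ### Dyadic grids and dyadic model operators -/

/-- An abstract dyadic grid on `ℝⁿ`: a nested family of cubes of dyadic side lengths
partitioning `ℝⁿ` at every scale. -/
structure DyadicGrid (n : ℕ) where
  cubes : Set (Cube n)
  side_mem : ∀ Q ∈ cubes, ∃ k : ℤ, Q.side = (2 : ℝ) ^ k
  covers : ∀ (k : ℤ) (x : Fin n → ℝ), ∃ Q ∈ cubes, Q.side = (2 : ℝ) ^ k ∧ x ∈ Q.toSet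
  nested : ∀ Q ∈ cubes, ∀ R ∈ cubes,
    Q.toSet ⊆ R.toSet ∨ R.toSet ⊆ Q.toSet ∨ Disjoint Q.toSet R.toSet

/-- The all-ones vector `1⃗ ∈ {0,1}ⁿ` (encoded with `true` for `1`). -/
def oneVec (n : ℕ) : Fin n → Bool := fun _ => true

/-- Admissibility for the Haar multiplier signature: at least two of the `m+1` Haar
functions are cancellative. -/
def IsHaarAdmissible {n m : ℕ} (α : Fin (m + 1) → Fin n → Bool) : Prop :=
  ∃ k k' : Fin (m + 1), k ≠ k' ∧ α k ≠ oneVec n ∧ α k' ≠ oneVec n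

/-- Admissibility for the paraproduct signature: `α_1 ≠ 1⃗` and at least one of the
remaining Haar functions is cancellative. -/
def IsParaAdmissible {n m : ℕ} (α : Fin (m + 2) → Fin n → Bool) : Prop :=
  α 0 ≠ oneVec n ∧ ∃ k : Fin (m + 2), k ≠ 0 ∧ α k ≠ oneVec n

/-- The `m`-linear Haar multiplier restricted to a collection `S` of cubes. -/
def haarMultOn {n m : ℕ} (S : Set (Cube n)) (ε : Cube n → ℝ)
    (α : Fin (m + 1) → Fin n → Bool) : MOp n m :=
  fun f x => ∑' Q : S,
    ε Q.1 * (∏ j : Fin m, ∫ y, f j y * Q.1.haar (α j.castSucc) y) *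
      Q.1.haar (α (Fin.last m)) x * ((Q.1.side ^ n) ^ (-((m : ℝ) - 1) / 2))

/-- The `m`-linear Haar multiplier `P^{α⃗}_ε` with respect to the dyadic grid `D`. -/
def haarMult {n m : ℕ} (D : DyadicGrid n) (ε : Cube n → ℝ)
    (α : Fin (m + 1) → Fin n → Bool) : MOp n m :=
  haarMultOn D.cubes ε α

/-- The `m`-linear dyadic paraproduct restricted to a collection `S` of cubes. -/
def paraProdOn {n m : ℕ} (S : Set (Cube n)) (ε : Cube n → ℝ) (g : Fn n)
    (α : Fin (m + 2) → Fin n → Bool) : MOp n m :=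
  fun f x => ∑' Q : S,
    ε Q.1 * (∫ y, g y * Q.1.haar (α 0) y) *
      (∏ j : Fin m, ∫ y, f j y * Q.1.haar (α j.succ.castSucc) y) *
      Q.1.haar (α (Fin.last (m + 1))) x * ((Q.1.side ^ n) ^ (-(m : ℝ) / 2))

/-- The `m`-linear dyadic paraproduct `π^{α⃗}_{g,ε}` with respect to `D`. -/
def paraProd {n m : ℕ} (D : DyadicGrid n) (ε : Cube n → ℝ) (g : Fn n)
    (α : Fin (m + 2) → Fin n → Bool) : MOp n m :=
  paraProdOn D.cubes ε g α

/-- Dyadic BMO quantity over a grid. -/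
def MemBMOD {n : ℕ} (D : DyadicGrid n) (b : Fn n) : Prop :=
  LocallyIntegrable b volume ∧ BddAbove (Set.range fun Q : D.cubes => bmoQ b Q.1)

/-- `T` is a dyadic model operator with respect to the grid `D`: a Haar multiplier or
a dyadic paraproduct with bounded coefficients. -/
def IsDyadicModelOp {n m : ℕ} (D : DyadicGrid n) (T : MOp n m) : Prop :=
  (∃ (ε : Cube n → ℝ) (α : Fin (m + 1) → Fin n → Bool),
      (∃ B, ∀ Q ∈ D.cubes, |ε Q| ≤ B) ∧ IsHaarAdmissible α ∧ T = haarMult D ε α) ∨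
  (∃ (ε : Cube n → ℝ) (g : Fn n) (α : Fin (m + 2) → Fin n → Bool),
      (∃ B, ∀ Q ∈ D.cubes, |ε Q| ≤ B) ∧ MemBMOD D g ∧ IsParaAdmissible α ∧
        T = paraProd D ε g α)

/-! ### Sparse collections and sparse operators -/

/-- A collection of cubes is `η`-sparse. -/
def IsSparse {n : ℕ} (η : ℝ) (S : Set (Cube n)) : Prop :=
  ∃ E : Cube n → Set (Fin n → ℝ),
    (∀ Q ∈ S, E Q ⊆ Q.toSet ∧ ENNReal.ofReal η * volume Q.toSet < volume (E Q)) ∧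
    S.PairwiseDisjoint E

/-- The factor `Γ(b, f, Q, γ)` of the sparse operators adapted to a mcommutator:
`γ = 0` gives `|b - ⟨b⟩_Q| ⟨|f|⟩_Q`, `γ = 1` gives `⟨|(b - ⟨b⟩_Q) f|⟩_Q`. -/
def GammaF {n : ℕ} (b f : Fn n) (Q : Cube n) (γ : Fin 2) (x : Fin n → ℝ) : ℝ≥0∞ :=
  if γ = 0 then ENNReal.ofReal (|b x - cubeAvg Q b| * cubeAvg Q fun y => |f y|)
  else ENNReal.ofReal (cubeAvg Q fun y => |(b y - cubeAvg Q b) * f y|)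

/-- The sparse operator `A^{γ⃗}_{S,b⃗}(f⃗)` adapted to the symbols `b⃗` (indexed along
the injection `ι : Fin ℓ → Fin m` describing the subset `I ⊆ {1,…,m}`). -/
def sparseOp {n m ℓ : ℕ} (S : Set (Cube n)) (ι : Fin ℓ → Fin m) (b : Fin ℓ → Fn n)
    (γ : Fin ℓ → Fin 2) (f : Fin m → Fn n) (x : Fin n → ℝ) : ℝ≥0∞ :=
  ∑' Q : S, Set.indicator Q.1.toSet
    (fun x' => (∏ s, GammaF (b s) (f (ι s)) Q.1 (γ s) x') *
      ∏ j ∈ Finset.univ.filter (fun j : Fin m => ∀ s, ι s ≠ j),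
        ENNReal.ofReal (cubeAvg Q.1 fun y => |f j y|)) x

/-- The classical linear sparse operator `A¹_S f = ∑_{Q ∈ S} ⟨|f|⟩_Q χ_Q`. -/
def linSparseOp {n : ℕ} (S : Set (Cube n)) (f : Fn n) (x : Fin n → ℝ) : ℝ≥0∞ :=
  ∑' Q : S, Set.indicator Q.1.toSet
    (fun _ => ENNReal.ofReal (cubeAvg Q.1 fun y => |f y|)) x

/-- The classical `m`-linear sparse operator (no symbols). -/
def mSparseOp {n m : ℕ} (S : Set (Cube n)) (f : Fin m → Fn n) (x : Fin n → ℝ) : ℝ≥0∞ :=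
  ∑' Q : S, Set.indicator Q.1.toSet
    (fun _ => ∏ j, ENNReal.ofReal (cubeAvg Q.1 fun y => |f j y|)) x

/-! ### Shifted dyadic grids -/

/-- A cube of the `t`-shifted dyadic grid, `t ∈ {0,1,2}ⁿ`. -/
def shiftedDyadicCube (n : ℕ) (t : Fin n → Fin 3) (k : ℤ) (mm : Fin n → ℤ) : Cube n where
  corner := fun i => (2 : ℝ) ^ k * ((mm i : ℝ) + (-1 : ℝ) ^ k * ((t i : ℕ) : ℝ) / 3)
  side := (2 : ℝ) ^ k
  side_pos := by positivity

/-- One of the `3ⁿ` shifted dyadic grids on `ℝⁿ`. -/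
def shiftedDyadicGrid (n : ℕ) (t : Fin n → Fin 3) : Set (Cube n) :=
  {Q | ∃ k mm, Q = shiftedDyadicCube n t k mm}

/-- The dyadic subcubes `D(Q₀)` of a cube `Q₀`. -/
def dyadicSubcubes {n : ℕ} (Q0 : Cube n) : Set (Cube n) :=
  {Q | ∃ (k : ℕ) (mm : Fin n → ℕ), (∀ i, mm i < 2 ^ k) ∧
    Q.side = Q0.side / 2 ^ k ∧ ∀ i, Q.corner i = Q0.corner i + mm i * (Q0.side / 2 ^ k)}

/-! ### Auxiliary constants for Bloom bounds -/

/-- The index set `{1,…,m} ∖ I` for an injection `ι : Fin ℓ → Fin m`. -/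
abbrev outIdx {m ℓ : ℕ} (ι : Fin ℓ → Fin m) : Type := {j : Fin m // ∀ s, ι s ≠ j}

/-- `max(q, p₁',…,p_m')`. -/
def sharpMax {m : ℕ} (q : ℝ) (p : Fin m → ℝ) : ℝ := max q (⨆ j, hconj (p j))

/-- The quantitative two-weight constant `C(μ⃗, λ⃗, p⃗)` from the Bloom bounds. -/
def bloomConst {n m ℓ : ℕ} (p : Fin m → ℝ) (ι : Fin ℓ → Fin m)
    (μ lam : Fin m → Fn n) : ℝ :=
  (∏ s : Fin ℓ,
      apConst (p (ι s)) (μ (ι s)) ^ max 1 (1 / (p (ι s) - 1)) *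
        apConst (p (ι s)) (lam (ι s)) ^
          ((1 / p (ι s)) *
            max (p (ι s)) (sharpMax (pTot fun j : outIdx ι => p j.1) p))) *
    multiApConst (fun j : outIdx ι => p j.1) (fun j => μ j.1) ^
      ((1 / pTot fun j : outIdx ι => p j.1) *
        sharpMax (pTot fun j : outIdx ι => p j.1) p)

/-! ### Maximal operators -/

/-- Hardy–Littlewood maximal function (over cubes), valued in `ℝ≥0∞`. -/
def maxFn {n : ℕ} (f : Fn n) (x : Fin n → ℝ) : ℝ≥0∞ :=
  ⨆ (Q : Cube n) (_ : x ∈ Q.toSet), ENNReal.ofReal (cubeAvg Q fun y => |f y|)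

/-- The cubes of `D` strictly containing `J`. -/
def truncCubes {n : ℕ} (D : DyadicGrid n) (J : Cube n) : Set (Cube n) :=
  {Q | Q ∈ D.cubes ∧ J.toSet ⊂ Q.toSet}

/-- The maximal truncated operator `T_♯` of a family of truncations
`S ↦ TOn S` of a dyadic model operator. -/
def maxTrunc {n m : ℕ} (D : DyadicGrid n) (TOn : Set (Cube n) → MOp n m)
    (f : Fin m → Fn n) (x : Fin n → ℝ) : ℝ≥0∞ :=
  ⨆ J : D.cubes, ENNReal.ofReal |TOn (truncCubes D J.1) f x|

end


section HaarCommAux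

open MeasureTheory Set

namespace HaarCommAux

/-! ### One-dimensional Haar facts -/

lemma ite_and_eq_indicator (a b : ℝ) :
    (fun t => if a ≤ t ∧ t < b then (1:ℝ) else 0) = (Set.Ico a b).indicator (fun _ => 1) := by
  funext t; simp [Set.indicator_apply, Set.mem_Ico]

lemma integral_ite_and {a b : ℝ} (hab : a ≤ b) :
    ∫ t : ℝ, (if a ≤ t ∧ t < b then (1:ℝ) else 0) = b - a := by
  rw [ite_and_eq_indicator, integral_indicator measurableSet_Ico, setIntegral_const,
    measureReal_def, Real.volume_Ico, ENNReal.toReal_ofReal (by linarith), smul_eq_mul, mul_one]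

lemma integrable_ite_and (a b : ℝ) :
    Integrable (fun t : ℝ => if a ≤ t ∧ t < b then (1:ℝ) else 0) := by
  rw [ite_and_eq_indicator]
  exact (integrable_indicator_iff measurableSet_Ico).2
    (integrableOn_const (by rw [Real.volume_Ico]; exact ENNReal.ofReal_ne_top))

lemma integral_haar1_false {a s : ℝ} (hs : 0 < s) :
    ∫ t : ℝ, Cube.haar1 a s false t = 0 := by
  unfold Cube.haar1
  simp only [Bool.false_eq_true, if_false]
  rw [integral_sub (integrable_ite_and _ _) (integrable_ite_and _ _),
    integral_ite_and (by linarith), integral_ite_and (by linarith)]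
  ring

lemma abs_haar1 {a s : ℝ} (hs : 0 < s) (one : Bool) (t : ℝ) :
    |Cube.haar1 a s one t| = if a ≤ t ∧ t < a + s then 1 else 0 := by
  unfold Cube.haar1
  cases one with
  | true =>
    simp only [if_true]
    split_ifs <;> norm_num
  | false =>
    simp only [Bool.false_eq_true, if_false]
    rcases le_or_gt a t with h1 | h1
    · rcases lt_or_ge t (a + s / 2) with h2 | h2
      · rw [if_pos ⟨h1, h2⟩, if_neg (fun h => absurd h.1 (by linarith)),
          if_pos ⟨h1, by linarith⟩]
        norm_num
      · rcases lt_or_ge t (a + s) with h3 | h3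
        · rw [if_neg (fun h => absurd h.2 (by linarith)), if_pos ⟨h2, h3⟩,
            if_pos ⟨h1, h3⟩]
          norm_num
        · rw [if_neg (fun h => absurd h.2 (by linarith)),
            if_neg (fun h => absurd h.2 (by linarith)),
            if_neg (fun h => absurd h.2 (by linarith))]
          norm_num
    · rw [if_neg (fun h => absurd h.1 (by linarith)),
        if_neg (fun h => absurd h.1 (by linarith)),
        if_neg (fun h => absurd h.1 (by linarith))]
      norm_num

lemma haar1_eq_zero {a s t : ℝ} (hs : 0 < s) (one : Bool) (h : ¬(a ≤ t ∧ t < a + s)) :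
    Cube.haar1 a s one t = 0 := by
  have h2 := abs_haar1 (a := a) hs one t
  rw [if_neg h] at h2
  exact abs_eq_zero.mp h2

lemma haar1_const_on_half {a s : ℝ} (hs : 0 < s) (one : Bool) {c t t' : ℝ}
    (hc : c = a ∨ c = a + s / 2)
    (ht : c ≤ t ∧ t < c + s / 2) (ht' : c ≤ t' ∧ t' < c + s / 2) :
    Cube.haar1 a s one t = Cube.haar1 a s one t' := by
  obtain ⟨ht1, ht2⟩ := ht; obtain ⟨ht1', ht2'⟩ := ht'
  unfold Cube.haar1
  cases one with
  | true =>
    simp only [if_true]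
    rcases hc with rfl | rfl
    · rw [if_pos ⟨ht1, by linarith⟩, if_pos ⟨ht1', by linarith⟩]
    · rw [if_pos ⟨by linarith, by linarith⟩, if_pos ⟨by linarith, by linarith⟩]
  | false =>
    simp only [Bool.false_eq_true, if_false]
    rcases hc with rfl | rfl
    · have n2t : ¬(c + s / 2 ≤ t ∧ t < c + s) := fun hh => by linarith [hh.1]
      have n2t' : ¬(c + s / 2 ≤ t' ∧ t' < c + s) := fun hh => by linarith [hh.1]
      have p1t : c ≤ t ∧ t < c + s / 2 := ⟨ht1, ht2⟩
      have p1t' : c ≤ t' ∧ t' < c + s / 2 := ⟨ht1', ht2'⟩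
      rw [if_pos p1t, if_neg n2t, if_pos p1t', if_neg n2t']
    · have n1t : ¬(a ≤ t ∧ t < a + s / 2) := fun hh => by linarith [hh.2]
      have n1t' : ¬(a ≤ t' ∧ t' < a + s / 2) := fun hh => by linarith [hh.2]
      have p2t : a + s / 2 ≤ t ∧ t < a + s := ⟨ht1, by linarith⟩
      have p2t' : a + s / 2 ≤ t' ∧ t' < a + s := ⟨ht1', by linarith⟩
      rw [if_neg n1t, if_neg n1t', if_pos p2t, if_pos p2t']

/-! ### n-dimensional Haar facts -/

variable {n : ℕ}

lemma abs_prod_haar1 (J : Cube n) (β : Fin n → Bool) (x : Fin n → ℝ) :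
    |∏ i, Cube.haar1 (J.corner i) J.side (β i) (x i)| =
      J.toSet.indicator (fun _ => (1:ℝ)) x := by
  rw [Finset.abs_prod]
  by_cases hx : x ∈ J.toSet
  · rw [Set.indicator_of_mem hx]
    refine Finset.prod_eq_one fun i _ => ?_
    rw [abs_haar1 J.side_pos, if_pos (hx i)]
  · rw [Set.indicator_of_notMem hx]
    obtain ⟨i, hi⟩ := not_forall.mp hx
    exact Finset.prod_eq_zero (Finset.mem_univ i)
      (by rw [abs_haar1 J.side_pos, if_neg hi])

lemma haar_eq_zero_of_not_mem (J : Cube n) (β : Fin n → Bool) {x : Fin n → ℝ}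
    (hx : x ∉ J.toSet) : J.haar β x = 0 := by
  have h := abs_prod_haar1 J β x
  rw [Set.indicator_of_notMem hx, abs_eq_zero] at h
  rw [Cube.haar, h, mul_zero]

lemma integral_haar_cancel (J : Cube n) {β : Fin n → Bool} (hβ : β ≠ oneVec n) :
    ∫ x : Fin n → ℝ, J.haar β x = 0 := by
  unfold Cube.haar
  rw [MeasureTheory.integral_const_mul,
    MeasureTheory.integral_fintype_prod_volume_eq_prod (ι := Fin n)
      (fun i t => Cube.haar1 (J.corner i) J.side (β i) t)]
  obtain ⟨i, hi⟩ : ∃ i, β i = false := by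
    by_contra h
    push_neg at h
    exact hβ (funext fun i => by simpa [oneVec] using h i)
  rw [Finset.prod_eq_zero (Finset.mem_univ i)
    (by rw [hi]; exact integral_haar1_false J.side_pos), mul_zero]

/-! ### Cube geometry -/

lemma corner_mem (Q : Cube n) : Q.corner ∈ Q.toSet :=
  fun _ => ⟨le_refl _, by linarith [Q.side_pos]⟩

lemma coord_subset {Q R : Cube n} (h : Q.toSet ⊆ R.toSet) (i : Fin n) :
    R.corner i ≤ Q.corner i ∧ Q.corner i + Q.side ≤ R.corner i + R.side := by
  refine ⟨(h (corner_mem Q) i).1, ?_⟩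
  by_contra hcon
  push_neg at hcon
  have hx : Function.update Q.corner i (max (Q.corner i) (R.corner i + R.side)) ∈ Q.toSet := by
    intro k
    by_cases hk : k = i
    · subst hk
      rw [Function.update_self]
      exact ⟨le_max_left _ _, max_lt (by linarith [Q.side_pos]) hcon⟩
    · rw [Function.update_of_ne hk]
      exact corner_mem Q k
  have h2 := (h hx i).2
  rw [Function.update_self] at h2
  linarith [le_max_right (Q.corner i) (R.corner i + R.side)]

lemma side_le {Q R : Cube n} (hn : 0 < n) (h : Q.toSet ⊆ R.toSet) : Q.side ≤ R.side := by
  obtain ⟨h1, h2⟩ := coord_subset h ⟨0, hn⟩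
  linarith

lemma cube_eq_of_subset_side_le {Q R : Cube n} (hn : 0 < n) (h : Q.toSet ⊆ R.toSet)
    (hs : R.side ≤ Q.side) : Q = R := by
  have hside : Q.side = R.side := le_antisymm (side_le hn h) hs
  have hc : ∀ i, Q.corner i = R.corner i := fun i => by
    have h2 := coord_subset h i
    have := h2.1; have := h2.2
    linarith
  obtain ⟨qc, qs, _⟩ := Q
  obtain ⟨rc, rs, _⟩ := R
  simp only at hside hc
  subst hside
  have : qc = rc := funext hc
  subst this
  rfl

lemma cube_eq_of_toSet_eq {Q R : Cube n} (hn : 0 < n) (h : Q.toSet = R.toSet) : Q = R :=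
  cube_eq_of_subset_side_le hn h.le (side_le hn h.ge)

lemma child_exists (D : DyadicGrid n) (hn : 0 < n) {J Q : Cube n}
    (hJ : J ∈ D.cubes) (hQ : Q ∈ D.cubes) (hss : J.toSet ⊂ Q.toSet) :
    ∃ R ∈ D.cubes, J.toSet ⊆ R.toSet ∧ R.toSet ⊆ Q.toSet ∧ R.side = Q.side / 2 ∧
      ∀ i, R.corner i = Q.corner i ∨ R.corner i = Q.corner i + Q.side / 2 := by
  obtain ⟨k1, hk1⟩ := D.side_mem J hJ
  obtain ⟨k2, hk2⟩ := D.side_mem Q hQ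
  have hlt : J.side < Q.side := by
    rcases lt_or_eq_of_le (side_le hn hss.1) with h | h
    · exact h
    · exact absurd (congrArg Cube.toSet (cube_eq_of_subset_side_le hn hss.1 h.ge)) hss.ne
  have hks : k1 < k2 := by
    rw [hk1, hk2] at hlt
    by_contra h
    push_neg at h
    exact absurd hlt (not_lt.mpr (zpow_le_zpow_right₀ one_le_two h))
  have hhalf : (2:ℝ) ^ (k2 - 1) = Q.side / 2 := by
    rw [hk2, zpow_sub₀ (two_ne_zero), zpow_one]
  have hJside : J.side ≤ Q.side / 2 := by
    rw [hk1, ← hhalf]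
    exact zpow_le_zpow_right₀ one_le_two (by omega)
  obtain ⟨R, hR, hRside0, hcornerJ⟩ := D.covers (k2 - 1) J.corner
  rw [hhalf] at hRside0
  have hRside := hRside0
  have hJR : J.toSet ⊆ R.toSet := by
    rcases D.nested J hJ R hR with h | h | h
    · exact h
    · have hRJ : R = J := cube_eq_of_subset_side_le hn h (by rw [hRside]; exact hJside)
      rw [hRJ]
    · exact absurd hcornerJ (Set.disjoint_left.mp h (corner_mem J))
  have hRQ : R.toSet ⊆ Q.toSet := by
    rcases D.nested R hR Q hQ with h | h | h
    · exact h
    · exfalso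
      have := side_le hn h
      rw [hRside] at this
      linarith [Q.side_pos]
    · exact absurd (hss.1 (corner_mem J)) (Set.disjoint_left.mp h hcornerJ)
  refine ⟨R, hR, hJR, hRQ, hRside, fun i => ?_⟩
  have hcoord := coord_subset hRQ
  by_cases hlow : R.corner i = Q.corner i
  · exact Or.inl hlow
  right
  have hlt_i : Q.corner i < R.corner i := lt_of_le_of_ne (hcoord i).1 (Ne.symm hlow)
  have hub : R.corner i ≤ Q.corner i + Q.side / 2 := by
    have h2 := (hcoord i).2
    rw [hRside] at h2
    linarith
  have hyQ : Function.update R.corner i (Q.corner i) ∈ Q.toSet := by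
    intro k
    by_cases hk : k = i
    · subst hk
      rw [Function.update_self]
      exact ⟨le_refl _, by linarith [Q.side_pos]⟩
    · rw [Function.update_of_ne hk]
      have hk2' := hcoord k
      rw [hRside] at hk2'
      exact ⟨hk2'.1, by linarith [Q.side_pos, hk2'.2]⟩
  obtain ⟨S, hS, hSside, hyS⟩ := D.covers (k2 - 1) (Function.update R.corner i (Q.corner i))
  rw [hhalf] at hSside
  have hSQ : S.toSet ⊆ Q.toSet := by
    rcases D.nested S hS Q hQ with h | h | h
    · exact h
    · exfalso
      have := side_le hn h
      rw [hSside] at this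
      linarith [Q.side_pos]
    · exact absurd hyQ (Set.disjoint_left.mp h hyS)
  have hSci : S.corner i = Q.corner i := by
    have h1 := (coord_subset hSQ i).1
    have h2 := (hyS i).1
    rw [Function.update_self] at h2
    exact le_antisymm h2 h1
  have hSR : Disjoint S.toSet R.toSet := by
    rcases D.nested S hS R hR with h | h | h
    · exfalso
      have hyR := h hyS
      have h3 := (hyR i).1
      rw [Function.update_self] at h3
      linarith
    · exfalso
      have hRS : R = S := cube_eq_of_subset_side_le hn h (by rw [hSside, hRside])
      have hTS : R.toSet = S.toSet := by rw [hRS]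
      have hyR : Function.update R.corner i (Q.corner i) ∈ R.toSet := by
        rw [hTS]; exact hyS
      have h3 := (hyR i).1
      rw [Function.update_self] at h3
      linarith
    · exact h
  by_contra hne2
  have hlt2 : R.corner i < Q.corner i + Q.side / 2 := lt_of_le_of_ne hub hne2
  have hRS : R.corner ∈ S.toSet := by
    intro k
    by_cases hk : k = i
    · subst hk
      rw [hSci, hSside]
      exact ⟨le_of_lt hlt_i, by linarith⟩
    · have h1 := (hyS k).1
      have h2 := (hyS k).2
      rw [Function.update_of_ne hk] at h1 h2
      exact ⟨h1, by linarith [h2]⟩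
  exact Set.disjoint_left.mp hSR hRS (corner_mem R)

lemma haar_const_on (D : DyadicGrid n) (hn : 0 < n) {J Q : Cube n}
    (hJ : J ∈ D.cubes) (hQ : Q ∈ D.cubes) (hss : J.toSet ⊂ Q.toSet) (β : Fin n → Bool) :
    ∃ c : ℝ, ∀ x ∈ J.toSet, Q.haar β x = c := by
  obtain ⟨R, hR, hJR, hRQ, hRside, halign⟩ := child_exists D hn hJ hQ hss
  refine ⟨Q.haar β R.corner, fun x hx => ?_⟩
  unfold Cube.haar
  congr 1
  refine Finset.prod_congr rfl fun i _ => ?_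
  have hxR := hJR hx
  refine haar1_const_on_half Q.side_pos (β i) (halign i) ?_ ?_
  · exact ⟨(hxR i).1, by have := (hxR i).2; rw [hRside] at this; linarith⟩
  · exact ⟨le_refl _, by linarith [Q.side_pos]⟩

lemma key_vanish (D : DyadicGrid n) (hn : 0 < n) {J Q : Cube n}
    (hJ : J ∈ D.cubes) (hQ : Q ∈ D.cubes) (hne : Q ≠ J) {β : Fin n → Bool}
    (hβ : β ≠ oneVec n) (r : ℝ) :
    ∫ y : Fin n → ℝ, (r * J.haar β y) * Q.haar β y = 0 := by
  rcases D.nested J hJ Q hQ with h | h | h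
  · have hss : J.toSet ⊂ Q.toSet :=
      ssubset_of_subset_of_ne h (fun he => hne ((cube_eq_of_toSet_eq hn he).symm))
    obtain ⟨c, hc⟩ := haar_const_on D hn hJ hQ hss β
    have heq : (fun y => (r * J.haar β y) * Q.haar β y) = fun y => (r * c) * J.haar β y := by
      funext y
      by_cases hy : y ∈ J.toSet
      · rw [hc y hy]; try ring
      · rw [haar_eq_zero_of_not_mem J β hy]; ring
    rw [heq, MeasureTheory.integral_const_mul, integral_haar_cancel J hβ, mul_zero]
  · have hss : Q.toSet ⊂ J.toSet :=
      ssubset_of_subset_of_ne h (fun he => hne (cube_eq_of_toSet_eq hn he))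
    obtain ⟨c, hc⟩ := haar_const_on D hn hQ hJ hss β
    have heq : (fun y => (r * J.haar β y) * Q.haar β y) = fun y => (r * c) * Q.haar β y := by
      funext y
      by_cases hy : y ∈ Q.toSet
      · rw [hc y hy]; try ring
      · rw [haar_eq_zero_of_not_mem Q β hy]; ring
    rw [heq, MeasureTheory.integral_const_mul, integral_haar_cancel Q hβ, mul_zero]
  · have heq : (fun y => (r * J.haar β y) * Q.haar β y) = fun _ => (0:ℝ) := by
      funext y
      by_cases hy : y ∈ J.toSet
      · rw [haar_eq_zero_of_not_mem Q β (Set.disjoint_left.mp h hy), mul_zero]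
      · rw [haar_eq_zero_of_not_mem J β hy]; ring
    rw [heq, integral_zero]

/-! ### Volume and indicator facts -/

lemma toSet_pi (J : Cube n) :
    J.toSet = Set.univ.pi fun i => Set.Ico (J.corner i) (J.corner i + J.side) := by
  ext x
  simp [Cube.toSet, Set.mem_pi, Set.mem_Ico]

lemma measurableSet_toSet (J : Cube n) : MeasurableSet J.toSet := by
  rw [toSet_pi]
  exact MeasurableSet.univ_pi fun i => measurableSet_Ico

lemma volume_toSet (J : Cube n) : volume J.toSet = ENNReal.ofReal (J.side ^ n) := by
  rw [toSet_pi, volume_pi_pi]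
  simp only [Real.volume_Ico, add_sub_cancel_left]
  rw [Finset.prod_const, Finset.card_univ, Fintype.card_fin,
    ← ENNReal.ofReal_pow J.side_pos.le]

lemma haar_mul_self (J : Cube n) (β : Fin n → Bool) (x : Fin n → ℝ) :
    J.haar β x * J.haar β x = (Real.sqrt (J.side ^ n))⁻¹ * (Real.sqrt (J.side ^ n))⁻¹ *
      J.toSet.indicator (fun _ => (1:ℝ)) x := by
  unfold Cube.haar
  have h2 : (∏ i, Cube.haar1 (J.corner i) J.side (β i) (x i)) *
      (∏ i, Cube.haar1 (J.corner i) J.side (β i) (x i)) =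
        J.toSet.indicator (fun _ => (1:ℝ)) x := by
    rw [← abs_mul_abs_self, abs_prod_haar1]
    by_cases hx : x ∈ J.toSet
    · rw [Set.indicator_of_mem hx]; norm_num
    · rw [Set.indicator_of_notMem hx]; norm_num
  rw [mul_mul_mul_comm, h2]

lemma haar_oneVec (J : Cube n) (x : Fin n → ℝ) :
    J.haar (oneVec n) x = (Real.sqrt (J.side ^ n))⁻¹ *
      J.toSet.indicator (fun _ => (1:ℝ)) x := by
  unfold Cube.haar
  congr 1
  by_cases hx : x ∈ J.toSet
  · rw [Set.indicator_of_mem hx]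
    refine Finset.prod_eq_one fun i _ => ?_
    simp [Cube.haar1, oneVec, (hx i).1, (hx i).2]
  · rw [Set.indicator_of_notMem hx]
    obtain ⟨i, hi⟩ := not_forall.mp hx
    exact Finset.prod_eq_zero (Finset.mem_univ i) (haar1_eq_zero J.side_pos _ hi)

end HaarCommAux

end HaarCommAux

/-- **Lemma (exact computation of a Haar multiplier commutator on Haar test
functions).** Testing `[b, P^{α⃗}_ε]_1` on `f_j = |J|^{1/2} h_J^{α_j}` (resp. `χ_J` in
the noncancellative slots) collapses the Haar sum to the single cube `J`, producing
`ε_J (b - ⟨b⟩_J) |J|^{1/2} h_J^{α_{m+1}}`, whose modulus is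
`|ε_J| |b - ⟨b⟩_J| χ_J`. -/
theorem haar_commutator_test_functions {n m : ℕ} (hm : 0 < m)
    (D : DyadicGrid n) (J : Cube n) (hJ : J ∈ D.cubes)
    (ε : Cube n → ℝ) (hε : ∃ B, ∀ Q ∈ D.cubes, |ε Q| ≤ B)
    (α : Fin (m + 1) → Fin n → Bool) (hα : IsHaarAdmissible α)
    (hα' : ∃ j : Fin m, j ≠ ⟨0, hm⟩ ∧ α j.castSucc ≠ oneVec n)
    (b : Fn n) (hb : MeasureTheory.LocallyIntegrable b MeasureTheory.volume)
    (f : Fin m → Fn n)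
    (hf : ∀ j : Fin m, f j =
      if α j.castSucc = oneVec n then J.toSet.indicator fun _ => (1 : ℝ)
      else fun x => Real.sqrt (J.side ^ n) * J.haar (α j.castSucc) x) :
    (∀ x, mcommutator b ⟨0, hm⟩ (haarMult D ε α) f x =
        ε J * (b x - cubeAvg J b) * Real.sqrt (J.side ^ n) * J.haar (α (Fin.last m)) x) ∧
      ∀ x, |mcommutator b ⟨0, hm⟩ (haarMult D ε α) f x| =
        |ε J| * |b x - cubeAvg J b| * J.toSet.indicator (fun _ => (1 : ℝ)) x := by
  classical
  obtain ⟨j₀, hj₀, hβ₀⟩ := hα'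
  have hn : 0 < n := by
    rcases Nat.eq_zero_or_pos n with h0 | h
    · subst h0; exact absurd (funext fun i => i.elim0) hβ₀
    · exact h
  have hv : 0 < (J.side ^ n : ℝ) := pow_pos J.side_pos n
  have hsv : 0 < Real.sqrt (J.side ^ n) := Real.sqrt_pos.mpr hv
  have hfj₀ : f j₀ = fun x => Real.sqrt (J.side ^ n) * J.haar (α j₀.castSucc) x := by
    rw [hf j₀, if_neg hβ₀]
  -- pointwise identity for all slots
  have hpoint : ∀ (j : Fin m) (x : Fin n → ℝ),
      f j x * J.haar (α j.castSucc) x =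
        (Real.sqrt (J.side ^ n))⁻¹ * J.toSet.indicator (fun _ => (1:ℝ)) x := by
    intro j x
    rw [hf j]
    by_cases h1 : α j.castSucc = oneVec n
    · rw [if_pos h1, h1, HaarCommAux.haar_oneVec]
      by_cases hx : x ∈ J.toSet
      · rw [Set.indicator_of_mem hx]; norm_num
      · rw [Set.indicator_of_notMem hx]; norm_num
    · rw [if_neg h1]
      have h2 := HaarCommAux.haar_mul_self J (α j.castSucc) x
      calc Real.sqrt (J.side ^ n) * J.haar (α j.castSucc) x * J.haar (α j.castSucc) x
          = Real.sqrt (J.side ^ n) *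
            (J.haar (α j.castSucc) x * J.haar (α j.castSucc) x) := by ring
        _ = Real.sqrt (J.side ^ n) * ((Real.sqrt (J.side ^ n))⁻¹ *
              (Real.sqrt (J.side ^ n))⁻¹ * J.toSet.indicator (fun _ => (1:ℝ)) x) := by
            rw [h2]
        _ = (Real.sqrt (J.side ^ n))⁻¹ * J.toSet.indicator (fun _ => (1:ℝ)) x := by
            field_simp
  -- the integrals in the unperturbed slots
  have hint : ∀ j : Fin m, ∫ y, f j y * J.haar (α j.castSucc) y = Real.sqrt (J.side ^ n) := by
    intro j
    simp only [hpoint]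
    rw [MeasureTheory.integral_const_mul,
      MeasureTheory.integral_indicator (HaarCommAux.measurableSet_toSet J),
      setIntegral_const, measureReal_def, HaarCommAux.volume_toSet, ENNReal.toReal_ofReal hv.le,
      smul_eq_mul, mul_one]
    field_simp
    rw [Real.sq_sqrt hv.le]
  -- the integral in the slot with symbol b
  have havg : ∫ y in J.toSet, b y = (J.side ^ n) * cubeAvg J b := by
    rw [cubeAvg, setAverage_eq, measureReal_def, HaarCommAux.volume_toSet, ENNReal.toReal_ofReal hv.le,
      smul_eq_mul, ← mul_assoc, mul_inv_cancel₀ hv.ne', one_mul]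
  have hint0 : ∫ y, (b y * f ⟨0, hm⟩ y) * J.haar (α (Fin.castSucc ⟨0, hm⟩)) y =
      Real.sqrt (J.side ^ n) * cubeAvg J b := by
    have hpt : ∀ y, (b y * f ⟨0, hm⟩ y) * J.haar (α (Fin.castSucc ⟨0, hm⟩)) y =
        (Real.sqrt (J.side ^ n))⁻¹ * J.toSet.indicator b y := by
      intro y
      rw [mul_assoc, hpoint ⟨0, hm⟩ y]
      by_cases hy : y ∈ J.toSet
      · rw [Set.indicator_of_mem hy, Set.indicator_of_mem hy]; ring
      · rw [Set.indicator_of_notMem hy, Set.indicator_of_notMem hy]; ring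
    simp only [hpt]
    rw [MeasureTheory.integral_const_mul,
      MeasureTheory.integral_indicator (HaarCommAux.measurableSet_toSet J), havg]
    field_simp
    rw [Real.sq_sqrt hv.le]
  -- collapse of the Haar sum to the single cube J
  have hcollapse : ∀ g : Fin m → Fn n, g j₀ = f j₀ → ∀ x,
      haarMult D ε α g x =
        ε J * (∏ j, ∫ y, g j y * J.haar (α j.castSucc) y) * J.haar (α (Fin.last m)) x *
          ((J.side ^ n : ℝ) ^ (-((m : ℝ) - 1) / 2)) := by
    intro g hg x
    unfold haarMult haarMultOn
    refine tsum_eq_single (⟨J, hJ⟩ : D.cubes) fun Q hQne => ?_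
    have hQJ : Q.1 ≠ J := fun h => hQne (Subtype.ext h)
    have hzero : ∫ y, g j₀ y * Q.1.haar (α j₀.castSucc) y = 0 := by
      rw [hg, hfj₀]
      exact HaarCommAux.key_vanish D hn hJ Q.2 hQJ hβ₀ _
    rw [Finset.prod_eq_zero (Finset.mem_univ j₀) hzero, mul_zero, zero_mul, zero_mul]
  -- products of the integrals
  have hprodf : (∏ j, ∫ y, f j y * J.haar (α j.castSucc) y) = Real.sqrt (J.side ^ n) ^ m := by
    rw [Finset.prod_congr rfl fun j _ => hint j, Finset.prod_const, Finset.card_univ,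
      Fintype.card_fin]
  have hupd : ∀ j : Fin m,
      (∫ y, (Function.update f ⟨0, hm⟩ fun y => b y * f ⟨0, hm⟩ y) j y *
        J.haar (α j.castSucc) y) =
      if j = ⟨0, hm⟩ then Real.sqrt (J.side ^ n) * cubeAvg J b
      else Real.sqrt (J.side ^ n) := by
    intro j
    by_cases hj : j = ⟨0, hm⟩
    · subst hj
      rw [if_pos rfl]
      simp only [Function.update_self]
      exact hint0
    · rw [if_neg hj]
      simp only [Function.update_of_ne hj]
      exact hint j
  have hprodu : (∏ j, ∫ y, (Function.update f ⟨0, hm⟩ fun y => b y * f ⟨0, hm⟩ y) j y *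
      J.haar (α j.castSucc) y) = Real.sqrt (J.side ^ n) ^ m * cubeAvg J b := by
    rw [Finset.prod_congr rfl fun j _ => hupd j]
    rw [Finset.prod_congr rfl fun j (_ : j ∈ Finset.univ) =>
      (show (if j = ⟨0, hm⟩ then Real.sqrt (J.side ^ n) * cubeAvg J b
          else Real.sqrt (J.side ^ n)) =
        Real.sqrt (J.side ^ n) * (if j = ⟨0, hm⟩ then cubeAvg J b else 1) from by
          split_ifs <;> ring)]
    rw [Finset.prod_mul_distrib, Finset.prod_const, Finset.card_univ, Fintype.card_fin,
      Finset.prod_ite_eq' Finset.univ (⟨0, hm⟩ : Fin m) fun _ => cubeAvg J b,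
      if_pos (Finset.mem_univ _)]
  -- the power identity
  have hpow : Real.sqrt (J.side ^ n) ^ m * ((J.side ^ n : ℝ) ^ (-((m : ℝ) - 1) / 2)) =
      Real.sqrt (J.side ^ n) := by
    rw [Real.sqrt_eq_rpow, ← Real.rpow_natCast ((J.side ^ n : ℝ) ^ ((1:ℝ)/2)) m,
      ← Real.rpow_mul hv.le, ← Real.rpow_add hv]
    congr 1
    ring
  -- part 1
  have hpart1 : ∀ x, mcommutator b ⟨0, hm⟩ (haarMult D ε α) f x =
      ε J * (b x - cubeAvg J b) * Real.sqrt (J.side ^ n) * J.haar (α (Fin.last m)) x := by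
    intro x
    unfold mcommutator
    rw [hcollapse f rfl x,
      hcollapse (Function.update f ⟨0, hm⟩ fun y => b y * f ⟨0, hm⟩ y)
        (Function.update_of_ne hj₀ _ f) x,
      hprodf, hprodu]
    calc b x * (ε J * Real.sqrt (J.side ^ n) ^ m * J.haar (α (Fin.last m)) x *
          ((J.side ^ n : ℝ) ^ (-((m : ℝ) - 1) / 2))) -
        ε J * (Real.sqrt (J.side ^ n) ^ m * cubeAvg J b) * J.haar (α (Fin.last m)) x *
          ((J.side ^ n : ℝ) ^ (-((m : ℝ) - 1) / 2))
        = ε J * (b x - cubeAvg J b) *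
            (Real.sqrt (J.side ^ n) ^ m * ((J.side ^ n : ℝ) ^ (-((m : ℝ) - 1) / 2))) *
            J.haar (α (Fin.last m)) x := by ring
      _ = ε J * (b x - cubeAvg J b) * Real.sqrt (J.side ^ n) *
            J.haar (α (Fin.last m)) x := by rw [hpow]
  refine ⟨hpart1, fun x => ?_⟩
  rw [hpart1 x]
  have habs : |J.haar (α (Fin.last m)) x| =
      (Real.sqrt (J.side ^ n))⁻¹ * J.toSet.indicator (fun _ => (1:ℝ)) x := by
    rw [Cube.haar, abs_mul, HaarCommAux.abs_prod_haar1, abs_inv,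
      abs_of_pos hsv]
  rw [abs_mul, abs_mul, abs_mul, habs, abs_of_pos hsv]
  field_simp
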